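/- Let A be an n×n real matrix such that (i) all entries of A are nonnegative, (ii) every column sum of A is at most 2, and (iii) every row sum of A is strictly positive and at most κ₀ for some κ₀ ∈ (0,1). Then for every p > 1 and every x ∈ ℝⁿ, ‖Ax‖_p ≤ (2κ₀^{p-1})^{1/p} ‖x‖_p. Consequently, if p is large enough that 2κ₀^{p-1} < 1, A is a contraction in the ℓ_p norm. -/
import Mathlib


/-- A nonnegative matrix with column sums at most 2 and row sums
in (0, κ₀] with κ₀ ∈ (0,1) satisfies ‖Ax‖_p ≤ (2 κ₀^(p-1))^(1/p) ‖x‖_p for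
every real p > 1. -/
theorem stmt_3 {n : ℕ} (A : Matrix (Fin n) (Fin n) ℝ) (κ₀ : ℝ)
    (hκ : κ₀ ∈ Set.Ioo (0 : ℝ) 1)
    (hnonneg : ∀ i j, 0 ≤ A i j)
    (hcol : ∀ j, ∑ i, A i j ≤ 2)
    (hrow : ∀ i, 0 < ∑ j, A i j ∧ ∑ j, A i j ≤ κ₀)
    (p : ℝ) (hp : 1 < p) (x : Fin n → ℝ) :
    (∑ i, |∑ j, A i j * x j| ^ p) ^ (1 / p) ≤
      (2 * κ₀ ^ (p - 1)) ^ (1 / p) * (∑ j, |x j| ^ p) ^ (1 / p) := by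
  obtain ⟨hκ0, hκ1⟩ := hκ
  have hp0 : 0 < p := lt_trans one_pos hp
  have hp1 : (0:ℝ) ≤ p - 1 := by linarith
  -- key pointwise bound via Jensen
  have key : ∀ i, |∑ j, A i j * x j| ^ p ≤ κ₀ ^ (p - 1) * ∑ j, A i j * |x j| ^ p := by
    intro i
    obtain ⟨hr0, hrκ⟩ := hrow i
    set r := ∑ j, A i j with hr
    have habs : |∑ j, A i j * x j| ≤ ∑ j, A i j * |x j| := by
      calc |∑ j, A i j * x j| ≤ ∑ j, |A i j * x j| := Finset.abs_sum_le_sum_abs _ _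
        _ = ∑ j, A i j * |x j| := by
            refine Finset.sum_congr rfl fun j _ => ?_
            rw [abs_mul, abs_of_nonneg (hnonneg i j)]
    have hsum_nonneg : (0:ℝ) ≤ ∑ j, A i j * |x j| :=
      Finset.sum_nonneg fun j _ => mul_nonneg (hnonneg i j) (abs_nonneg _)
    have h1 : |∑ j, A i j * x j| ^ p ≤ (∑ j, A i j * |x j|) ^ p :=
      Real.rpow_le_rpow (abs_nonneg _) habs hp0.le
    -- Jensen with weights A i j / r
    have hconv : ConvexOn ℝ (Set.Ici (0:ℝ)) (fun t : ℝ => t ^ p) :=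
      convexOn_rpow hp.le
    have hw1 : ∑ j, A i j / r = 1 := by
      rw [← Finset.sum_div, ← hr, div_self hr0.ne']
    have hjensen : ((∑ j, (A i j / r) • |x j|) : ℝ) ^ p ≤
        ∑ j, (A i j / r) • (|x j| ^ p) := by
      have := hconv.map_sum_le (t := Finset.univ) (w := fun j => A i j / r)
        (p := fun j => |x j|)
        (fun j _ => div_nonneg (hnonneg i j) hr0.le) hw1
        (fun j _ => Set.mem_Ici.mpr (abs_nonneg _))
      simpa using this
    have heq : (∑ j, (A i j / r) • |x j|) = (∑ j, A i j * |x j|) / r := by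
      simp only [smul_eq_mul, div_mul_eq_mul_div, ← Finset.sum_div]
    have heq2 : (∑ j, (A i j / r) • (|x j| ^ p)) = (∑ j, A i j * |x j| ^ p) / r := by
      simp only [smul_eq_mul, div_mul_eq_mul_div, ← Finset.sum_div]
    rw [heq, heq2, Real.div_rpow hsum_nonneg hr0.le] at hjensen
    -- multiply by r^p
    have hrp : (0:ℝ) < r ^ p := Real.rpow_pos_of_pos hr0 p
    have h2 : (∑ j, A i j * |x j|) ^ p ≤ r ^ (p - 1) * ∑ j, A i j * |x j| ^ p := by
      have h := (div_le_div_iff₀ hrp hr0).mp hjensen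
      have hrp1 : r ^ (p - 1) = r ^ p / r := by
        rw [Real.rpow_sub hr0, Real.rpow_one]
      rw [hrp1, div_mul_eq_mul_div, le_div_iff₀ hr0]
      nlinarith [h]
    have h3 : r ^ (p - 1) ≤ κ₀ ^ (p - 1) :=
      Real.rpow_le_rpow hr0.le hrκ hp1
    have hsum2 : (0:ℝ) ≤ ∑ j, A i j * |x j| ^ p :=
      Finset.sum_nonneg fun j _ => mul_nonneg (hnonneg i j)
        (Real.rpow_nonneg (abs_nonneg _) _)
    calc |∑ j, A i j * x j| ^ p ≤ (∑ j, A i j * |x j|) ^ p := h1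
      _ ≤ r ^ (p - 1) * ∑ j, A i j * |x j| ^ p := h2
      _ ≤ κ₀ ^ (p - 1) * ∑ j, A i j * |x j| ^ p :=
          mul_le_mul_of_nonneg_right h3 hsum2
  -- sum the pointwise bounds and swap the order of summation
  have total : (∑ i, |∑ j, A i j * x j| ^ p) ≤
      2 * κ₀ ^ (p - 1) * ∑ j, |x j| ^ p := by
    have hκp : (0:ℝ) ≤ κ₀ ^ (p - 1) := Real.rpow_nonneg hκ0.le _
    calc (∑ i, |∑ j, A i j * x j| ^ p)
        ≤ ∑ i, κ₀ ^ (p - 1) * ∑ j, A i j * |x j| ^ p :=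
          Finset.sum_le_sum fun i _ => key i
      _ = κ₀ ^ (p - 1) * ∑ j, (∑ i, A i j) * |x j| ^ p := by
          rw [← Finset.mul_sum, Finset.sum_comm]
          simp [Finset.sum_mul]
      _ ≤ κ₀ ^ (p - 1) * ∑ j, 2 * |x j| ^ p := by
          refine mul_le_mul_of_nonneg_left (Finset.sum_le_sum fun j _ => ?_) hκp
          exact mul_le_mul_of_nonneg_right (hcol j)
            (Real.rpow_nonneg (abs_nonneg _) _)
      _ = 2 * κ₀ ^ (p - 1) * ∑ j, |x j| ^ p := by
          rw [← Finset.mul_sum]; ring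
  -- take 1/p powers
  have hL : (0:ℝ) ≤ ∑ i, |∑ j, A i j * x j| ^ p :=
    Finset.sum_nonneg fun i _ => Real.rpow_nonneg (abs_nonneg _) _
  have hR : (0:ℝ) ≤ ∑ j, |x j| ^ p :=
    Finset.sum_nonneg fun j _ => Real.rpow_nonneg (abs_nonneg _) _
  have hC : (0:ℝ) ≤ 2 * κ₀ ^ (p - 1) :=
    mul_nonneg (by norm_num) (Real.rpow_nonneg hκ0.le _)
  calc (∑ i, |∑ j, A i j * x j| ^ p) ^ (1 / p)
      ≤ (2 * κ₀ ^ (p - 1) * ∑ j, |x j| ^ p) ^ (1 / p) :=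
        Real.rpow_le_rpow hL total (by positivity)
    _ = (2 * κ₀ ^ (p - 1)) ^ (1 / p) * (∑ j, |x j| ^ p) ^ (1 / p) :=
        Real.mul_rpow hC hR
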